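/- The Ricci tensor of the Bergman metric of the Siegel–Jacobi disk, defined by Ric_{α\bar{β}} = -∂²(ln G)/∂z_α ∂\bar{z}_β with G(z,w) = 2kμ(1-w\bar{w})^{-3}, has only one nonzero component: Ric_{w\bar{w}} = -3/(1-w\bar{w})², and Ric_{z\bar{z}} = Ric_{z\bar{w}} = Ric_{w\bar{z}} = 0. Consequently the Siegel–Jacobi disk is not Einstein: Ric is not a scalar multiple of the metric h (since Ric_{z\bar{z}} = 0 but h_{z\bar{z}} = μ/(1-w\bar{w}) ≠ 0). -/

import Mathlib

open Complex

/-- Polarization of `ln G`, where `G(z,w) = 2kμ(1-w w̄)^{-3}` is the determinant of the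
metric of the Siegel–Jacobi disk; it depends only on `(w, w̄)`. -/
noncomputable def sjLogDet (k μ : ℝ) (w wb : ℂ) : ℂ :=
  Complex.log (2 * (k : ℂ) * (μ : ℂ) / (1 - w * wb) ^ 3)

lemma sjLogDet_deriv_fst (k μ : ℝ) (w wb : ℂ) (h1 : 1 - w * wb ≠ 0)
    (h2 : 2 * (k : ℂ) * (μ : ℂ) / (1 - w * wb) ^ 3 ∈ Complex.slitPlane) :
    deriv (fun w' : ℂ => sjLogDet k μ w' wb) w = 3 * wb / (1 - w * wb) := by
  have hd1 : HasDerivAt (fun w' : ℂ => 1 - w' * wb) (-wb) w := by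
    simpa using ((hasDerivAt_id w).mul_const wb).const_sub 1
  have hd2 := hd1.pow 3
  have hd3 := (hasDerivAt_const w (2 * (k : ℂ) * (μ : ℂ))).div hd2 (pow_ne_zero 3 h1)
  have hd4 := hd3.clog h2
  have : deriv (fun w' : ℂ => sjLogDet k μ w' wb) w = _ := hd4.deriv
  have hd4' : HasDerivAt (fun w' : ℂ =>
      Complex.log (2 * (k : ℂ) * (μ : ℂ) / (1 - w' * wb) ^ 3)) _ w := hd4
  rw [show (fun w' : ℂ => sjLogDet k μ w' wb) = (fun w' : ℂ =>
      Complex.log (2 * (k : ℂ) * (μ : ℂ) / (1 - w' * wb) ^ 3)) from rfl, hd4'.deriv]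
  simp only [Pi.div_apply, Pi.pow_apply]
  have h3 : (1 - w * wb) ^ 3 ≠ 0 := pow_ne_zero 3 h1
  have hq : 2 * (k : ℂ) * (μ : ℂ) / (1 - w * wb) ^ 3 ≠ 0 := Complex.slitPlane_ne_zero h2
  have hkμ : 2 * (k : ℂ) * (μ : ℂ) ≠ 0 := fun h => hq (by simp [h])
  have hk0 : (k : ℂ) ≠ 0 := fun h => hkμ (by simp [h])
  have hμ0 : (μ : ℂ) ≠ 0 := fun h => hkμ (by simp [h])
  field_simp
  ring

/-- The Ricci tensor `Ric_{α β̄} = -∂²(ln G)/∂z_α ∂ z̄_β` of the Bergman metric of the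
Siegel–Jacobi disk has only one nonzero component, `Ric_{w w̄} = -3/(1-w w̄)²`;
consequently the Siegel–Jacobi disk is not an Einstein manifold: `Ric` is not a
scalar multiple of the metric `h`. -/
theorem siegelJacobi_ricci (k μ : ℝ) (hk : 0 < k) (hμ : 0 < μ)
    (z w : ℂ) (hw : ‖w‖ < 1) :
    let P : ℂ := 1 - w * starRingEnd ℂ w
    let η : ℂ := (z + starRingEnd ℂ z * w) / P
    let ηb : ℂ := (starRingEnd ℂ z + z * starRingEnd ℂ w) / P
    -- Ric_{z z̄} = 0 (ln G is independent of z, z̄):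
    (-(deriv (fun zb : ℂ => deriv (fun _z' : ℂ => sjLogDet k μ w (starRingEnd ℂ w)) z)
        (starRingEnd ℂ z)) = 0) ∧
    -- Ric_{z w̄} = 0:
    (-(deriv (fun wb : ℂ => deriv (fun _z' : ℂ => sjLogDet k μ w wb) z)
        (starRingEnd ℂ w)) = 0) ∧
    -- Ric_{w z̄} = 0:
    (-(deriv (fun zb : ℂ => deriv (fun w' : ℂ => sjLogDet k μ w' (starRingEnd ℂ w)) w)
        (starRingEnd ℂ z)) = 0) ∧
    -- Ric_{w w̄} = -3/(1-w w̄)²: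
    (-(deriv (fun wb : ℂ => deriv (fun w' : ℂ => sjLogDet k μ w' wb) w)
        (starRingEnd ℂ w)) = -3 / P ^ 2) ∧
    -- not Einstein: no scalar `c` with `Ric = c • h`:
    ¬ ∃ c : ℂ, (0 : ℂ) = c * ((μ : ℂ) / P) ∧
        (-3 / P ^ 2 : ℂ) = c * ((μ : ℂ) * η * ηb / P + 2 * (k : ℂ) / P ^ 2) := by
  intro P η ηb
  -- basic facts
  have hns : Complex.normSq w < 1 := by
    have h0 : Complex.normSq w = ‖w‖ ^ 2 := by
      rw [Complex.normSq_eq_norm_sq]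
    nlinarith [norm_nonneg w]
  have hnsnn : 0 ≤ Complex.normSq w := Complex.normSq_nonneg w
  have hPreal : (1 : ℂ) - w * starRingEnd ℂ w = ((1 - Complex.normSq w : ℝ) : ℂ) := by
    rw [Complex.mul_conj]; push_cast; ring
  have hP0 : (1 : ℂ) - w * starRingEnd ℂ w ≠ 0 := by
    rw [hPreal]
    exact Complex.ofReal_ne_zero.mpr (by linarith)
  refine ⟨?_, ?_, ?_, ?_, ?_⟩
  · simp
  · simp
  · simp
  · -- main computation
    have hmem : 2 * (k : ℂ) * (μ : ℂ) / (1 - w * starRingEnd ℂ w) ^ 3 ∈ Complex.slitPlane := by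
      rw [hPreal]
      have : (2 * (k : ℂ) * (μ : ℂ) / ((1 - Complex.normSq w : ℝ) : ℂ) ^ 3)
          = ((2 * k * μ / (1 - Complex.normSq w) ^ 3 : ℝ) : ℂ) := by push_cast; ring
      rw [this]
      exact Complex.ofReal_mem_slitPlane.mpr
        (div_pos (by positivity) (pow_pos (by linarith) 3))
    have hcont1 : ContinuousAt (fun wb : ℂ => 1 - w * wb) (starRingEnd ℂ w) := by fun_prop
    have h1ev : ∀ᶠ wb in nhds (starRingEnd ℂ w), 1 - w * wb ≠ 0 :=
      hcont1.eventually_ne hP0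
    have hcont2 : ContinuousAt (fun wb : ℂ => 2 * (k : ℂ) * (μ : ℂ) / (1 - w * wb) ^ 3)
        (starRingEnd ℂ w) := by
      apply ContinuousAt.div continuousAt_const (by fun_prop)
      exact pow_ne_zero 3 hP0
    have h2ev : ∀ᶠ wb in nhds (starRingEnd ℂ w),
        2 * (k : ℂ) * (μ : ℂ) / (1 - w * wb) ^ 3 ∈ Complex.slitPlane :=
      hcont2.eventually_mem (Complex.isOpen_slitPlane.mem_nhds hmem)
    have hev : (fun wb : ℂ => deriv (fun w' : ℂ => sjLogDet k μ w' wb) w)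
        =ᶠ[nhds (starRingEnd ℂ w)] (fun wb : ℂ => 3 * wb / (1 - w * wb)) := by
      filter_upwards [h1ev, h2ev] with wb h1 h2
      exact sjLogDet_deriv_fst k μ w wb h1 h2
    rw [hev.deriv_eq]
    have hd1 : HasDerivAt (fun wb : ℂ => 3 * wb) 3 (starRingEnd ℂ w) := by
      simpa using (hasDerivAt_id (starRingEnd ℂ w)).const_mul (3 : ℂ)
    have hd2 : HasDerivAt (fun wb : ℂ => 1 - w * wb) (-w) (starRingEnd ℂ w) := by
      simpa using ((hasDerivAt_id (starRingEnd ℂ w)).const_mul w).const_sub 1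
    have hd3 := hd1.div hd2 hP0
    have hd3' : HasDerivAt (fun wb : ℂ => 3 * wb / (1 - w * wb)) _ _ := hd3
    rw [hd3'.deriv]
    show _ = -3 / ((1 : ℂ) - w * starRingEnd ℂ w) ^ 2
    field_simp
    ring
  · rintro ⟨c, h1, h2⟩
    have hc : c = 0 := by
      have hμ0 : (μ : ℂ) ≠ 0 := Complex.ofReal_ne_zero.mpr hμ.ne'
      have := h1.symm
      have hP : P ≠ 0 := hP0
      field_simp at this
      exact (mul_eq_zero.mp (this.trans (mul_zero P))).resolve_right hμ0
    rw [hc, zero_mul] at h2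
    have : (-3 : ℂ) = 0 := by
      have hP : P ≠ 0 := hP0
      field_simp at h2
      simpa using h2
    norm_num at this
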